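/- Let G be a finitely generated group whose word problem WP(G) is recursively enumerable, and let H ≤ G be a finitely generated subgroup (with its own finite symmetric generating set). If X ⊆ A^G is an effectively closed subshift, then its H-projective subdynamics π_H(X) = {x ∈ A^H : ∃ y ∈ X, ∀ h ∈ H, x_h = y_h} is an effectively closed subshift of A^H. -/

import Mathlib

open scoped Classical

noncomputable section

namespace SDG

/-! ### Relativized computability -/

/-- Partial recursive functions `ℕ →. ℕ` relative to an oracle `O`. -/
inductive NatPartrecIn (O : ℕ →. ℕ) : (ℕ →. ℕ) → Prop
  | oracle : NatPartrecIn O O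
  | zero : NatPartrecIn O (pure 0)
  | succ : NatPartrecIn O Nat.succ
  | left : NatPartrecIn O ↑fun n : ℕ => n.unpair.1
  | right : NatPartrecIn O ↑fun n : ℕ => n.unpair.2
  | pair {f g} : NatPartrecIn O f → NatPartrecIn O g →
      NatPartrecIn O fun n => Nat.pair <$> f n <*> g n
  | comp {f g} : NatPartrecIn O f → NatPartrecIn O g →
      NatPartrecIn O fun n => g n >>= f
  | prec {f g} : NatPartrecIn O f → NatPartrecIn O g →
      NatPartrecIn O (Nat.unpaired fun a n =>
        n.rec (f a) fun y IH => do let i ← IH; g (Nat.pair a (Nat.pair y i)))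
  | rfind {f} : NatPartrecIn O f →
      NatPartrecIn O fun a => Nat.rfind fun n => (fun m => m = 0) <$> f (Nat.pair a n)

/-- A partial function between `Primcodable` types is partial recursive in the oracle `O`. -/
def PartrecIn (O : ℕ →. ℕ) {α σ : Type} [Primcodable α] [Primcodable σ] (f : α →. σ) : Prop :=
  NatPartrecIn O fun n =>
    Part.bind (Part.ofOption (Encodable.decode (α := α) n)) fun a => (f a).map Encodable.encode

/-- A predicate is recursively enumerable in the oracle `O` if it is the domain of a partial
function recursive in `O`. -/
def RePredIn (O : ℕ →. ℕ) {α : Type} [Primcodable α] (p : α → Prop) : Prop :=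
  PartrecIn O fun a => Part.assert (p a) fun _ => Part.some ()

/-- The characteristic function (as an oracle `ℕ →. ℕ`) of a set `L` of elements of a
`Primcodable` type: on the code of an element of `L` it answers `1`, elsewhere `0`. -/
def charFun {α : Type} [Primcodable α] (L : Set α) : ℕ →. ℕ :=
  fun n => Part.some (if ∃ a ∈ L, Encodable.encode a = n then 1 else 0)

/-! ### Finitely generated groups, words and pattern codings -/

variable {G : Type} [Group G]

/-- The group element represented by a word over the generators `S`. -/
def wordEval {k : ℕ} (S : Fin k → G) (w : List (Fin k)) : G :=
  (w.map S).prod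

/-- `S : Fin k → G` is a finite symmetric generating family containing the identity. -/
def IsGenData {k : ℕ} (S : Fin k → G) : Prop :=
  (∃ i, S i = 1) ∧ (∀ i, ∃ j, S j = (S i)⁻¹) ∧ Subgroup.closure (Set.range S) = ⊤

/-- The word problem of `G` with respect to the generating family `S`. -/
def WP {k : ℕ} (S : Fin k → G) : Set (List (Fin k)) :=
  {w | wordEval S w = 1}

/-- A pattern coding over the alphabet `A`: a finite list of pairs (word, symbol). -/
abbrev PatternCoding (k : ℕ) (A : Type) : Type :=
  List (List (Fin k) × A)

/-- The subshift defined by a set `C` of pattern codings: configurations in which no translate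
of a coded pattern occurs. -/
def XC {k : ℕ} (S : Fin k → G) {A : Type} (C : Set (PatternCoding k A)) : Set (G → A) :=
  {x | ¬ ∃ (g : G) (c : PatternCoding k A), c ∈ C ∧ ∀ p ∈ c, x (g * wordEval S p.1) = p.2}

/-- A set is effectively closed if it is defined by a recursively enumerable set of
pattern codings. -/
def EffectivelyClosed {k : ℕ} (S : Fin k → G) {A : Type} [Primcodable A]
    (X : Set (G → A)) : Prop :=
  ∃ C : Set (PatternCoding k A), REPred (· ∈ C) ∧ X = XC S C

/-- A set is `G`-effectively closed if it is defined by a set of pattern codings which is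
recursively enumerable with oracle the word problem of `G`. -/
def GEffectivelyClosed {k : ℕ} (S : Fin k → G) {A : Type} [Primcodable A]
    (X : Set (G → A)) : Prop :=
  ∃ C : Set (PatternCoding k A), RePredIn (charFun (WP S)) (· ∈ C) ∧ X = XC S C

/-- A pattern coding is consistent if words representing the same group element receive the
same symbol. -/
def Consistent {k : ℕ} (S : Fin k → G) {A : Type} (c : PatternCoding k A) : Prop :=
  ∀ p ∈ c, ∀ q ∈ c, wordEval S p.1 = wordEval S q.1 → p.2 = q.2

/-! ### Subshifts, SFTs, sofic subshifts -/

/-- `X ⊆ A^G` is a subshift: closed (for the product of the discrete topology) and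
shift-invariant. -/
def IsSubshift {A : Type} (X : Set (G → A)) : Prop :=
  (letI : TopologicalSpace A := ⊥; IsClosed X) ∧
    ∀ x ∈ X, ∀ g : G, (fun h => x (g⁻¹ * h)) ∈ X

/-- A pattern with finite support over the alphabet `A`. -/
structure Pattern (G : Type) (A : Type) where
  supp : Finset G
  val : (g : G) → g ∈ supp → A

/-- The pattern `p` occurs in the configuration `x` at position `g`. -/
def PatternOccurs {A : Type} (p : Pattern G A) (x : G → A) (g : G) : Prop :=
  ∀ (h : G) (hh : h ∈ p.supp), x (g * h) = p.val h hh

/-- The subshift defined by a set of forbidden patterns. -/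
def XPat {A : Type} (Fs : Set (Pattern G A)) : Set (G → A) :=
  {x | ¬ ∃ (g : G) (p : Pattern G A), p ∈ Fs ∧ PatternOccurs p x g}

/-- A subshift of finite type: defined by a finite set of forbidden patterns. -/
def IsSFT {A : Type} (X : Set (G → A)) : Prop :=
  ∃ Fs : Set (Pattern G A), Fs.Finite ∧ X = XPat Fs

/-- A witness that `X` is sofic: an SFT `Y` over a finite alphabet `B` together with a factor
code (continuous shift-equivariant surjection) from `Y` onto `X`. -/
structure SoficVia (G : Type) [Group G] {A : Type} (X : Set (G → A)) : Type 1 where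
  B : Type
  finB : Fintype B
  Y : Set (G → B)
  sft : IsSFT Y
  subY : IsSubshift Y
  phi : (G → B) → (G → A)
  cont : letI : TopologicalSpace B := ⊥
         letI : TopologicalSpace A := ⊥
         ContinuousOn phi Y
  equiv : ∀ y ∈ Y, ∀ g : G, phi (fun h => y (g⁻¹ * h)) = fun h => phi y (g⁻¹ * h)
  image : phi '' Y = X

/-- A subshift is sofic if it is the image of an SFT under a factor code. -/
def IsSofic {A : Type} (X : Set (G → A)) : Prop :=
  Nonempty (SoficVia G X)

/-- A factor code from `X` onto `Y`: continuous (discrete product topologies),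
shift-equivariant and surjective. -/
def FactorCode {A B : Type} (X : Set (G → A)) (Y : Set (G → B))
    (φ : (G → A) → (G → B)) : Prop :=
  (letI : TopologicalSpace A := ⊥
   letI : TopologicalSpace B := ⊥
   ContinuousOn φ X) ∧
  (∀ x ∈ X, ∀ g : G, φ (fun h => x (g⁻¹ * h)) = fun h => φ x (g⁻¹ * h)) ∧
  φ '' X = Y

/-- Two subshifts are conjugate if there is a shift-equivariant homeomorphism between them. -/
def Conjugate {A B : Type} (X : Set (G → A)) (Y : Set (G → B)) : Prop :=
  ∃ (φ : (G → A) → (G → B)) (ψ : (G → B) → (G → A)),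
    FactorCode X Y φ ∧ FactorCode Y X ψ ∧
    (∀ x ∈ X, ψ (φ x) = x) ∧ (∀ y ∈ Y, φ (ψ y) = y)

/-- The one-or-less subshift: configurations with at most one occurrence of the symbol `1`
(represented by `true`). -/
def Xle1 (G : Type) : Set (G → Bool) :=
  {x | ∀ g h : G, x g = true → x h = true → g = h}

/-! ### `G`-machines -/

/-- A `G`-machine: finite set of states, finite tape alphabet `A` with a blank symbol, initial
state, accepting states, and a transition function moving with the generators `Fin k`. -/
structure GMachine (k : ℕ) (A : Type) : Type 1 where
  Q : Type
  finQ : Fintype Q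
  blank : A
  q0 : Q
  QF : Set Q
  delta : A × Q → A × Q × Fin k

/-- One step of a `G`-machine in the fixed head model: if `δ(x(1),q) = (a,q',s)` then the new
configuration is `σ_{s⁻¹} x̃` where `x̃` is `x` with the value at `1` replaced by `a`. -/
def GMachine.step {k : ℕ} {A : Type} (M : GMachine k A) (S : Fin k → G) :
    (G → A) × M.Q → (G → A) × M.Q :=
  fun xq =>
    let t := M.delta (xq.1 1, xq.2)
    let xt : G → A := Function.update xq.1 1 t.1
    (fun h => xt (S t.2.2 * h), t.2.1)

/-- The configuration which equals the pattern `p` on its support and `blank` elsewhere. -/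
def Pattern.config {A : Type} (p : Pattern G A) (blank : A) : G → A :=
  fun g => if h : g ∈ p.supp then p.val g h else blank

/-- The `G`-machine `M` accepts the pattern `p` if starting from the configuration `x^p` in the
initial state it eventually reaches an accepting state. -/
def GMachine.Accepts {k : ℕ} {A : Type} (M : GMachine k A) (S : Fin k → G)
    (p : Pattern G A) : Prop :=
  ∃ n : ℕ, ((M.step S)^[n] (p.config M.blank, M.q0)).2 ∈ M.QF

/-- A set of patterns is `G`-recursively enumerable if some `G`-machine accepts exactly its
elements. -/
def GRecEnum {k : ℕ} (S : Fin k → G) {A : Type} (L : Set (Pattern G A)) : Prop :=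
  ∃ M : GMachine k A, ∀ p : Pattern G A, M.Accepts S p ↔ p ∈ L

/-- The consistent pattern coding `c` defines the pattern `p`. -/
def Defines {k : ℕ} (S : Fin k → G) {A : Type} (c : PatternCoding k A)
    (p : Pattern G A) : Prop :=
  (∀ g : G, g ∈ p.supp ↔ ∃ q ∈ c, wordEval S q.1 = g) ∧
  ∀ q ∈ c, ∀ hg : wordEval S q.1 ∈ p.supp, p.val (wordEval S q.1) hg = q.2

/-- `p(C)`: the set of patterns defined by the consistent pattern codings of `C`. -/
def patternsOf {k : ℕ} (S : Fin k → G) {A : Type} (C : Set (PatternCoding k A)) :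
    Set (Pattern G A) :=
  {p | ∃ c ∈ C, Consistent S c ∧ Defines S c p}

/-- A set of patterns is closed by extensions if any pattern extending a pattern of the set
also belongs to the set. -/
def ClosedByExtensions {A : Type} (L : Set (Pattern G A)) : Prop :=
  ∀ (p₁ p₂ : Pattern G A) (hsub : p₁.supp ⊆ p₂.supp),
    (∀ (g : G) (hg : g ∈ p₁.supp), p₂.val g (hsub hg) = p₁.val g hg) →
    p₁ ∈ L → p₂ ∈ L

/-! ### Balls, ends, amenability -/

/-- The ball of radius `n` in the word metric given by `S`. -/
def ballS {k : ℕ} (S : Fin k → G) (n : ℕ) : Set G :=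
  {x | ∃ w : List (Fin k), w.length ≤ n ∧ wordEval S w = x}

/-- Adjacency in the Cayley graph restricted to the set `V`. -/
def Adj {k : ℕ} (S : Fin k → G) (V : Set G) (a b : G) : Prop :=
  a ∈ V ∧ b ∈ V ∧ ∃ i, a * S i = b

/-- Reachability inside `V` in the Cayley graph of `(G,S)`. -/
def Reach {k : ℕ} (S : Fin k → G) (V : Set G) (a b : G) : Prop :=
  Relation.ReflTransGen (Adj S V) a b

/-- `G` has at least two ends: for some `n`, the complement of the ball of radius `n` in the
Cayley graph has at least two infinite connected components. -/
def HasTwoOrMoreEnds {k : ℕ} (S : Fin k → G) : Prop :=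
  ∃ (n : ℕ) (x y : G), x ∉ ballS S n ∧ y ∉ ballS S n ∧
    {z | Reach S (ballS S n)ᶜ x z}.Infinite ∧
    {z | Reach S (ballS S n)ᶜ y z}.Infinite ∧
    ¬ Reach S (ballS S n)ᶜ x y

/-- The Følner condition: `G` is amenable. -/
def FolnerAmenable (G : Type) [Group G] : Prop :=
  ∀ (K : Finset G) (ε : ℝ), 0 < ε →
    ∃ F : Finset G, F.Nonempty ∧ ∀ k ∈ K,
      ((F \ F.image (fun x => x * k)).card : ℝ) < ε * F.card

/-! ### `G × ℤ`, presentations, hardness and the domino problems -/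

/-- Generators of `G × ℤ`: the generators of `G` paired with `0`, together with `(1,±1)`. -/
def prodGens {k : ℕ} (S : Fin k → G) : Fin (k + 2) → G × Multiplicative ℤ :=
  fun i =>
    if h : (i : ℕ) < k then (S ⟨i, h⟩, 1)
    else if (i : ℕ) = k then (1, Multiplicative.ofAdd 1)
    else (1, Multiplicative.ofAdd (-1))

/-- The element of the free group over the generator indices represented by a word. -/
def freeWord {k : ℕ} (w : List (Fin k)) : FreeGroup (Fin k) :=
  (w.map FreeGroup.of).prod

/-- `G` is recursively presented with respect to `S`: there is a recursively enumerable set of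
relators (words over the generators) whose normal closure in the free group over the
generator indices is the kernel of the evaluation map. -/
def RecursivelyPresented {k : ℕ} (S : Fin k → G) : Prop :=
  ∃ R : Set (List (Fin k)), REPred (· ∈ R) ∧
    MonoidHom.ker (FreeGroup.lift S) = Subgroup.normalClosure (freeWord '' R)

/-- `L` is hard for the class of predicates recursively enumerable in the oracle `O`
(equivalently, hard for the halting problem of machines with oracle `O`): every
such predicate many-one reduces to `L` via a computable function. -/
def OracleREHard {α : Type} [Primcodable α] (O : ℕ →. ℕ) (L : Set α) : Prop :=
  ∀ p : ℕ → Prop, RePredIn O p → ∃ f : ℕ → α, Computable f ∧ ∀ n, p n ↔ f n ∈ L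

/-- The domino problem of `(K,T)`: pairs `(N, F)` of an alphabet size and a finite list of
pattern codings over `ℕ` such that no configuration with symbols `< N` avoids `F`. -/
def DP {K : Type} [Group K] {m : ℕ} (T : Fin m → K) : Set (ℕ × List (PatternCoding m ℕ)) :=
  {q | ¬ ∃ x : K → ℕ, (∀ g, x g < q.1) ∧ x ∈ XC T {c | c ∈ q.2}}

/-- The origin constrained domino problem of `(K,T)`: triples `((N,a),F)` such that no
configuration with symbols `< N` and the symbol `a` at the origin avoids `F`. -/
def OCDP {K : Type} [Group K] {m : ℕ} (T : Fin m → K) :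
    Set ((ℕ × ℕ) × List (PatternCoding m ℕ)) :=
  {q | ¬ ∃ x : K → ℕ, (∀ g, x g < q.1.1) ∧ x 1 = q.1.2 ∧ x ∈ XC T {c | c ∈ q.2}}

/-! ### Auxiliary material for Statement 8 -/

open Nat.Partrec (Code)
open Nat.Partrec.Code

/-- Every REPred has a primitive-recursive monotone stage-wise approximation. -/
theorem repred_approx {α : Type} [Primcodable α] {p : α → Prop} (h : REPred p) :
    ∃ dec : ℕ → α → Bool, Primrec₂ dec ∧
      (∀ {s t : ℕ} {a : α}, s ≤ t → dec s a = true → dec t a = true) ∧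
      (∀ a, p a ↔ ∃ s, dec s a = true) := by
  unfold REPred at h
  have h' : Nat.Partrec fun n =>
      Part.bind (Encodable.decode (α := α) n) fun a =>
        (Part.assert (p a) fun _ => Part.some ()).map Encodable.encode := h
  obtain ⟨cd, hcd⟩ := exists_code.1 h'
  refine ⟨fun s a => (evaln s cd (Encodable.encode a)).isSome, ?_, ?_, ?_⟩
  · have : Primrec fun sa : ℕ × α =>
        (evaln sa.1 cd (Encodable.encode sa.2)).isSome :=
      Primrec.option_isSome.comp
        (primrec_evaln.comp ((Primrec.fst.pair (Primrec.const cd)).pair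
          (Primrec.encode.comp Primrec.snd)))
    exact this.to₂
  · intro s t a hst hs
    rw [Option.isSome_iff_exists] at hs ⊢
    obtain ⟨x, hx⟩ := hs
    exact ⟨x, evaln_mono hst hx⟩
  · intro a
    have hdom : p a ↔ (eval cd (Encodable.encode a)).Dom := by
      rw [hcd]
      simp [Part.assert, Seq.seq, Part.bind]
    rw [hdom, Part.dom_iff_mem]
    constructor
    · intro ⟨x, hx⟩
      obtain ⟨s, hs⟩ := evaln_complete.1 hx
      exact ⟨s, Option.isSome_iff_exists.2 ⟨x, hs⟩⟩
    · intro ⟨s, hs⟩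
      rw [Option.isSome_iff_exists] at hs
      obtain ⟨x, hx⟩ := hs
      exact ⟨x, evaln_complete.2 ⟨s, hx⟩⟩


theorem repred_sigma {α : Type} [Primcodable α] {R : α → ℕ → Bool}
    (hR : Primrec₂ R) : REPred fun a => ∃ n, R a n = true := by
  have h1 : Partrec fun a => Nat.rfind fun n => (Part.some (R a n) : Part Bool) :=
    Partrec.rfind (Computable₂.partrec₂ hR.to_comp)
  have h2 : Partrec fun a =>
      (Nat.rfind fun n => (Part.some (R a n) : Part Bool)).map fun _ => () :=
    h1.map (Computable.const ()).to₂
  unfold REPred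
  refine h2.of_eq fun a => ?_
  apply Part.ext'
  · rw [Part.map_Dom]
    have h3 : (Part.assert (∃ n, R a n = true) fun _ => Part.some ()).Dom ↔
        ∃ n, R a n = true := by
      constructor
      · rintro ⟨h, -⟩; exact h
      · intro h; exact ⟨h, trivial⟩
    rw [h3]
    refine Iff.trans (Nat.rfind_dom (p := fun n => Part.some (R a n))) ?_
    constructor
    · rintro ⟨n, hn, -⟩; exact ⟨n, by simpa using hn⟩
    · rintro ⟨n, hn⟩; exact ⟨n, by simp [hn], fun _ => trivial⟩
  · intro _ _; rfl


/-! #### Word lemmas -/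

theorem wordEval_nil {k : ℕ} (S : Fin k → G) : wordEval S [] = 1 := rfl

theorem wordEval_cons {k : ℕ} (S : Fin k → G) (i : Fin k) (w : List (Fin k)) :
    wordEval S (i :: w) = S i * wordEval S w := by simp [wordEval]

theorem wordEval_append {k : ℕ} (S : Fin k → G) (w₁ w₂ : List (Fin k)) :
    wordEval S (w₁ ++ w₂) = wordEval S w₁ * wordEval S w₂ := by simp [wordEval]

def wordInv {k : ℕ} (ι : Fin k → Fin k) (w : List (Fin k)) : List (Fin k) :=
  w.reverse.map ι

theorem wordEval_wordInv {k : ℕ} (S : Fin k → G) {ι : Fin k → Fin k}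
    (hι : ∀ i, S (ι i) = (S i)⁻¹) (w : List (Fin k)) :
    wordEval S (wordInv ι w) = (wordEval S w)⁻¹ := by
  induction w with
  | nil => simp [wordInv, wordEval]
  | cons i w ih =>
    have : wordInv ι (i :: w) = wordInv ι w ++ [ι i] := by
      simp [wordInv]
    rw [this, wordEval_append, ih, wordEval_cons]
    rw [wordEval_cons, mul_inv_rev]
    simp [hι, wordEval_nil]

theorem exists_word {k : ℕ} {S : Fin k → G} (hS : IsGenData S) (g : G) :
    ∃ w, wordEval S w = g := by
  obtain ⟨-, hinv, hcl⟩ := hS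
  choose ι hι using hinv
  have hg : g ∈ Subgroup.closure (Set.range S) := by rw [hcl]; trivial
  induction hg using Subgroup.closure_induction with
  | mem x hx => obtain ⟨i, rfl⟩ := hx; exact ⟨[i], by simp [wordEval]⟩
  | one => exact ⟨[], rfl⟩
  | mul x y _ _ hx hy =>
    obtain ⟨w₁, rfl⟩ := hx; obtain ⟨w₂, rfl⟩ := hy
    exact ⟨w₁ ++ w₂, wordEval_append S w₁ w₂⟩
  | inv x _ hx =>
    obtain ⟨w, rfl⟩ := hx
    exact ⟨wordInv ι w, wordEval_wordInv S hι w⟩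

/-! #### Boolean machinery -/

section Aux
set_option linter.unusedSectionVars false

variable {k m : ℕ} {A : Type} [DecidableEq A] [Primcodable A]

def trWord (u : Fin m → List (Fin k)) (w : List (Fin m)) : List (Fin k) :=
  w.foldr (fun i acc => u i ++ acc) []

theorem trWord_cons (u : Fin m → List (Fin k)) (i : Fin m) (w : List (Fin m)) :
    trWord u (i :: w) = u i ++ trWord u w := rfl

def trCoding (u : Fin m → List (Fin k)) (c : PatternCoding m A) : PatternCoding k A :=
  c.map fun p => (trWord u p.1, p.2)

def aget (Z : List (List (Fin k) × A)) (w : List (Fin k)) : Option A :=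
  Z.foldr (fun t r => if t.1 = w then some t.2 else r) none

theorem aget_cons (t : List (Fin k) × A) (Z : List (List (Fin k) × A)) (w : List (Fin k)) :
    aget (t :: Z) w = if t.1 = w then some t.2 else aget Z w := rfl

theorem aget_eq_some {Z : List (List (Fin k) × A)} {w : List (Fin k)} {b : A}
    (h : aget Z w = some b) : ∃ t ∈ Z, t.1 = w ∧ t.2 = b := by
  induction Z with
  | nil => simp [aget] at h
  | cons t Z ih =>
    rw [aget_cons] at h
    by_cases ht : t.1 = w
    · rw [if_pos ht] at h
      exact ⟨t, List.mem_cons_self .., ht, (Option.some.injEq ..).mp h⟩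
    · rw [if_neg ht] at h
      obtain ⟨t', h1, h2⟩ := ih h
      exact ⟨t', List.mem_cons_of_mem _ h1, h2⟩

theorem aget_isSome {Z : List (List (Fin k) × A)} {w : List (Fin k)}
    (h : w ∈ Z.map Prod.fst) : ∃ b, aget Z w = some b := by
  induction Z with
  | nil => simp at h
  | cons t Z ih =>
    rw [aget_cons]
    by_cases ht : t.1 = w
    · exact ⟨t.2, if_pos ht⟩
    · rw [if_neg ht]
      refine ih ?_
      simp only [List.map_cons, List.mem_cons] at h
      rcases h with h | h
      · exact absurd h.symm ht
      · exact h

theorem aget_graph {φ : List (Fin k) → A} {Z : List (List (Fin k) × A)}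
    (hZ : ∀ t ∈ Z, t.2 = φ t.1) {w : List (Fin k)} (hw : w ∈ Z.map Prod.fst) :
    aget Z w = some (φ w) := by
  induction Z with
  | nil => simp at hw
  | cons t Z ih =>
    rw [aget_cons]
    by_cases ht : t.1 = w
    · rw [if_pos ht, hZ t (List.mem_cons_self ..), ht]
    · rw [if_neg ht]
      refine ih (fun t' ht' => hZ t' (List.mem_cons_of_mem _ ht')) ?_
      simp only [List.map_cons, List.mem_cons] at hw
      rcases hw with h | h
      · exact absurd h.symm ht
      · exact h

def allZ (la : List A) (W : List (List (Fin k))) : List (List (List (Fin k) × A)) :=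
  W.foldr (fun w acc => (acc.map fun Z => la.map fun a => (w, a) :: Z).flatten) [[]]

theorem mem_allZ {la : List A} (hla : ∀ a, a ∈ la) (W : List (List (Fin k)))
    {Z : List (List (Fin k) × A)} : Z ∈ allZ la W ↔ Z.map Prod.fst = W := by
  induction W generalizing Z with
  | nil => simp [allZ, List.map_eq_nil_iff]
  | cons w W ih =>
    show Z ∈ (((allZ la W).map fun Z => la.map fun a => (w, a) :: Z)).flatten ↔ _
    rw [List.mem_flatten]
    constructor
    · rintro ⟨L, hL, hZL⟩
      rw [List.mem_map] at hL
      obtain ⟨Z', hZ', rfl⟩ := hL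
      rw [List.mem_map] at hZL
      obtain ⟨a, _, rfl⟩ := hZL
      simp [ih.mp hZ']
    · intro h
      cases Z with
      | nil => simp at h
      | cons t Z' =>
        simp only [List.map_cons, List.cons.injEq] at h
        refine ⟨la.map fun a => (w, a) :: Z', ?_, ?_⟩
        · exact List.mem_map.2 ⟨Z', ih.mpr h.2, rfl⟩
        · refine List.mem_map.2 ⟨t.2, hla t.2, ?_⟩
          rw [← h.1]

def matchB (Z : List (List (Fin k) × A)) (c' : PatternCoding k A) : Bool :=
  c'.all fun p => decide (aget Z p.1 = some p.2)

def matchAtB (Z : List (List (Fin k) × A)) (d : List (Fin k) × PatternCoding k A) : Bool :=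
  d.2.all fun q => decide (aget Z (d.1 ++ q.1) = some q.2)

def inconsB (decWP : ℕ → List (Fin k) → Bool) (ι : Fin k → Fin k) (s : ℕ)
    (Z : List (List (Fin k) × A)) : Bool :=
  Z.any fun t => Z.any fun t' => decWP s (t.1 ++ wordInv ι t'.1) && !decide (t.2 = t'.2)

def checkZ (decWP : ℕ → List (Fin k) → Bool) (ι : Fin k → Fin k) (s : ℕ)
    (c' : PatternCoding k A) (D : List (List (Fin k) × PatternCoding k A))
    (Z : List (List (Fin k) × A)) : Bool :=
  !(matchB Z c' && D.all fun d => !matchAtB Z d) || inconsB decWP ι s Z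

def bigW (c' : PatternCoding k A) (D : List (List (Fin k) × PatternCoding k A)) :
    List (List (Fin k)) :=
  c'.map Prod.fst ++ (D.map fun d => d.2.map fun q => d.1 ++ q.1).flatten

def Rfun (u : Fin m → List (Fin k)) (ι : Fin k → Fin k)
    (decWP : ℕ → List (Fin k) → Bool) (decC : ℕ → PatternCoding k A → Bool)
    (la : List A) (c : PatternCoding m A) (n : ℕ) : Bool :=
  Option.casesOn (Encodable.decode (α := List (List (Fin k) × PatternCoding k A)) n.unpair.2)
    false
    (fun D =>
      (D.all fun d => decC n.unpair.1 d.2) &&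
      ((allZ la (bigW (trCoding u c) D)).all fun Z =>
         checkZ decWP ι n.unpair.1 (trCoding u c) D Z))

/-! #### Primitive recursiveness -/

theorem list_all_eq_foldr' {β : Type} (l : List β) (p : β → Bool) :
    l.foldr (fun b r => bif p b then r else false) true = l.all p := by
  induction l with
  | nil => rfl
  | cons b l ih => simp only [List.foldr_cons, List.all_cons, ih]; cases p b <;> simp

theorem list_any_eq_foldr' {β : Type} (l : List β) (p : β → Bool) :
    l.foldr (fun b r => bif p b then true else r) false = l.any p := by
  induction l with
  | nil => rfl
  | cons b l ih => simp only [List.foldr_cons, List.any_cons, ih]; cases p b <;> simp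

theorem primrec_list_all {α β : Type} [Primcodable α] [Primcodable β]
    {f : α → List β} {g : α → β → Bool} (hf : Primrec f) (hg : Primrec₂ g) :
    Primrec fun a => (f a).all (g a) := by
  have := Primrec.list_foldr hf (Primrec.const true)
      (Primrec.cond (hg.comp Primrec.fst (Primrec.fst.comp Primrec.snd))
        (Primrec.snd.comp Primrec.snd) (Primrec.const false)).to₂
  exact this.of_eq fun a => list_all_eq_foldr' (f a) (g a)

theorem primrec_list_any {α β : Type} [Primcodable α] [Primcodable β]
    {f : α → List β} {g : α → β → Bool} (hf : Primrec f) (hg : Primrec₂ g) :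
    Primrec fun a => (f a).any (g a) := by
  have := Primrec.list_foldr hf (Primrec.const false)
      (Primrec.cond (hg.comp Primrec.fst (Primrec.fst.comp Primrec.snd))
        (Primrec.const true) (Primrec.snd.comp Primrec.snd)).to₂
  exact this.of_eq fun a => list_any_eq_foldr' (f a) (g a)

theorem primrec_band {α : Type} [Primcodable α] {f g : α → Bool}
    (hf : Primrec f) (hg : Primrec g) : Primrec fun a => f a && g a :=
  (Primrec.cond hf hg (Primrec.const false)).of_eq fun a => by cases f a <;> simp

theorem primrec_bor {α : Type} [Primcodable α] {f g : α → Bool}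
    (hf : Primrec f) (hg : Primrec g) : Primrec fun a => f a || g a :=
  (Primrec.cond hf (Primrec.const true) hg).of_eq fun a => by cases f a <;> simp

theorem primrec_bnot {α : Type} [Primcodable α] {f : α → Bool}
    (hf : Primrec f) : Primrec fun a => !(f a) :=
  (Primrec.dom_finite Bool.not).comp hf

theorem primrec_trWord {α : Type} [Primcodable α] (u : Fin m → List (Fin k))
    {f : α → List (Fin m)} (hf : Primrec f) : Primrec fun a => trWord u (f a) := by
  have := Primrec.list_foldr hf (Primrec.const ([] : List (Fin k)))
    (Primrec.list_append.comp
      ((Primrec.dom_finite u).comp (Primrec.fst.comp Primrec.snd))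
      (Primrec.snd.comp Primrec.snd)).to₂
  exact this.of_eq fun a => rfl

theorem primrec_wordInv {α : Type} [Primcodable α] (ι : Fin k → Fin k)
    {f : α → List (Fin k)} (hf : Primrec f) : Primrec fun a => wordInv ι (f a) :=
  Primrec.list_map (Primrec.list_reverse.comp hf)
    ((Primrec.dom_finite ι).comp Primrec.snd).to₂

theorem primrec_trCoding {α : Type} [Primcodable α] (u : Fin m → List (Fin k))
    {f : α → PatternCoding m A} (hf : Primrec f) : Primrec fun a => trCoding u (f a) :=
  Primrec.list_map hf
    ((primrec_trWord u (Primrec.fst.comp Primrec.snd)).pair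
      (Primrec.snd.comp Primrec.snd)).to₂

theorem primrec_aget {α : Type} [Primcodable α]
    {f : α → List (List (Fin k) × A)} {g : α → List (Fin k)}
    (hf : Primrec f) (hg : Primrec g) : Primrec fun a => aget (f a) (g a) := by
  have := Primrec.list_foldr hf (Primrec.const (none : Option A))
    (Primrec.ite
      (Primrec.eq.comp (Primrec.fst.comp (Primrec.fst.comp Primrec.snd))
        (hg.comp Primrec.fst))
      (Primrec.option_some.comp (Primrec.snd.comp (Primrec.fst.comp Primrec.snd)))
      (Primrec.snd.comp Primrec.snd)).to₂
  exact this.of_eq fun a => rfl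

theorem primrec_allZ {α : Type} [Primcodable α] (la : List A)
    {f : α → List (List (Fin k))} (hf : Primrec f) : Primrec fun a => allZ la (f a) := by
  have := Primrec.list_foldr hf (Primrec.const ([[]] : List (List (List (Fin k) × A))))
    (Primrec.list_flatten.comp
      (Primrec.list_map (Primrec.snd.comp Primrec.snd)
        (Primrec.list_map (Primrec.const la)
          (Primrec.list_cons.comp
            ((Primrec.fst.comp (Primrec.snd.comp (Primrec.fst.comp Primrec.fst))).pair
              Primrec.snd)
            (Primrec.snd.comp Primrec.fst)).to₂).to₂)).to₂
  exact this.of_eq fun a => rfl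

theorem primrec_matchB {α : Type} [Primcodable α]
    {f : α → List (List (Fin k) × A)} {g : α → PatternCoding k A}
    (hf : Primrec f) (hg : Primrec g) : Primrec fun a => matchB (f a) (g a) :=
  primrec_list_all hg
    (Primrec.eq.comp
      (primrec_aget (hf.comp Primrec.fst) (Primrec.fst.comp Primrec.snd))
      (Primrec.option_some.comp (Primrec.snd.comp Primrec.snd))).decide.to₂

theorem primrec_matchAtB {α : Type} [Primcodable α]
    {f : α → List (List (Fin k) × A)} {g : α → List (Fin k) × PatternCoding k A}
    (hf : Primrec f) (hg : Primrec g) : Primrec fun a => matchAtB (f a) (g a) :=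
  primrec_list_all (Primrec.snd.comp hg)
    (Primrec.eq.comp
      (primrec_aget (hf.comp Primrec.fst)
        (Primrec.list_append.comp (Primrec.fst.comp (hg.comp Primrec.fst))
          (Primrec.fst.comp Primrec.snd)))
      (Primrec.option_some.comp (Primrec.snd.comp Primrec.snd))).decide.to₂

theorem primrec_inconsB {α : Type} [Primcodable α]
    {decWP : ℕ → List (Fin k) → Bool} (hdecWP : Primrec₂ decWP) (ι : Fin k → Fin k)
    {fs : α → ℕ} {fZ : α → List (List (Fin k) × A)}
    (hs : Primrec fs) (hZ : Primrec fZ) :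
    Primrec fun a => inconsB decWP ι (fs a) (fZ a) :=
  primrec_list_any hZ
    (primrec_list_any (f := fun p : α × (List (Fin k) × A) => fZ p.1)
      (hZ.comp Primrec.fst)
      (primrec_band
        (hdecWP.comp (hs.comp (Primrec.fst.comp Primrec.fst))
          (Primrec.list_append.comp (Primrec.fst.comp (Primrec.snd.comp Primrec.fst))
            (primrec_wordInv ι (Primrec.fst.comp Primrec.snd))))
        (primrec_bnot
          (Primrec.eq.comp (Primrec.snd.comp (Primrec.snd.comp Primrec.fst))
            (Primrec.snd.comp Primrec.snd)).decide)).to₂).to₂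

theorem primrec_checkZ {α : Type} [Primcodable α]
    {decWP : ℕ → List (Fin k) → Bool} (hdecWP : Primrec₂ decWP) (ι : Fin k → Fin k)
    {fs : α → ℕ} {fc : α → PatternCoding k A}
    {fD : α → List (List (Fin k) × PatternCoding k A)}
    {fZ : α → List (List (Fin k) × A)}
    (hs : Primrec fs) (hc : Primrec fc) (hD : Primrec fD) (hZ : Primrec fZ) :
    Primrec fun a => checkZ decWP ι (fs a) (fc a) (fD a) (fZ a) :=
  primrec_bor
    (primrec_bnot
      (primrec_band (primrec_matchB hZ hc)
        (primrec_list_all hD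
          (primrec_bnot (primrec_matchAtB (hZ.comp Primrec.fst) Primrec.snd)).to₂)))
    (primrec_inconsB hdecWP ι hs hZ)

theorem primrec_bigW {α : Type} [Primcodable α]
    {fc : α → PatternCoding k A} {fD : α → List (List (Fin k) × PatternCoding k A)}
    (hc : Primrec fc) (hD : Primrec fD) : Primrec fun a => bigW (fc a) (fD a) :=
  Primrec.list_append.comp
    (Primrec.list_map hc (Primrec.fst.comp Primrec.snd).to₂)
    (Primrec.list_flatten.comp
      (Primrec.list_map hD
        (Primrec.list_map (Primrec.snd.comp Primrec.snd)
          (Primrec.list_append.comp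
            (Primrec.fst.comp (Primrec.snd.comp Primrec.fst))
            (Primrec.fst.comp Primrec.snd)).to₂).to₂))

theorem primrec_Rfun (u : Fin m → List (Fin k)) (ι : Fin k → Fin k)
    {decWP : ℕ → List (Fin k) → Bool} {decC : ℕ → PatternCoding k A → Bool}
    (hdecWP : Primrec₂ decWP) (hdecC : Primrec₂ decC) (la : List A) :
    Primrec₂ (Rfun u ι decWP decC la) := by
  have ho : Primrec fun x : PatternCoding m A × ℕ =>
      (Encodable.decode (α := List (List (Fin k) × PatternCoding k A)) x.2.unpair.2) :=
    Primrec.decode.comp (Primrec.snd.comp (Primrec.unpair.comp Primrec.snd))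
  have hbody : Primrec fun y : (PatternCoding m A × ℕ) ×
      List (List (Fin k) × PatternCoding k A) =>
      ((y.2.all fun d => decC y.1.2.unpair.1 d.2) &&
       ((allZ la (bigW (trCoding u y.1.1) y.2)).all fun Z =>
          checkZ decWP ι y.1.2.unpair.1 (trCoding u y.1.1) y.2 Z)) := by
    have hs' : Primrec fun y : (PatternCoding m A × ℕ) ×
        List (List (Fin k) × PatternCoding k A) => y.1.2.unpair.1 :=
      Primrec.fst.comp (Primrec.unpair.comp (Primrec.snd.comp Primrec.fst))
    have hc' : Primrec fun y : (PatternCoding m A × ℕ) ×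
        List (List (Fin k) × PatternCoding k A) => trCoding u (y.1.1) :=
      primrec_trCoding u (Primrec.fst.comp Primrec.fst)
    exact primrec_band
      (primrec_list_all Primrec.snd
        (hdecC.comp (hs'.comp Primrec.fst) (Primrec.snd.comp Primrec.snd)).to₂)
      (primrec_list_all (primrec_allZ la (primrec_bigW hc' Primrec.snd))
        (primrec_checkZ hdecWP ι (hs'.comp Primrec.fst) (hc'.comp Primrec.fst)
          (Primrec.snd.comp Primrec.fst) Primrec.snd).to₂)
  have := Primrec.option_casesOn ho (Primrec.const false) hbody.to₂
  exact this.to₂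

/-! #### Boolean/propositional characterizations -/

theorem matchB_iff {Z : List (List (Fin k) × A)} {c' : PatternCoding k A} :
    matchB Z c' = true ↔ ∀ p ∈ c', aget Z p.1 = some p.2 := by
  simp [matchB]

theorem matchAtB_iff {Z : List (List (Fin k) × A)} {d : List (Fin k) × PatternCoding k A} :
    matchAtB Z d = true ↔ ∀ q ∈ d.2, aget Z (d.1 ++ q.1) = some q.2 := by
  simp [matchAtB]

theorem inconsB_iff {decWP : ℕ → List (Fin k) → Bool} {ι : Fin k → Fin k} {s : ℕ}
    {Z : List (List (Fin k) × A)} :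
    inconsB decWP ι s Z = true ↔
      ∃ t ∈ Z, ∃ t' ∈ Z, decWP s (t.1 ++ wordInv ι t'.1) = true ∧ t.2 ≠ t'.2 := by
  simp [inconsB]

theorem checkZ_iff {decWP : ℕ → List (Fin k) → Bool} {ι : Fin k → Fin k} {s : ℕ}
    {c' : PatternCoding k A} {D : List (List (Fin k) × PatternCoding k A)}
    {Z : List (List (Fin k) × A)} :
    checkZ decWP ι s c' D Z = true ↔
      ((matchB Z c' = true ∧ ∀ d ∈ D, matchAtB Z d = false) →
        inconsB decWP ι s Z = true) := by
  have hb : (matchB Z c' && D.all fun d => !matchAtB Z d) = true ↔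
      (matchB Z c' = true ∧ ∀ d ∈ D, matchAtB Z d = false) := by
    rw [Bool.and_eq_true, List.all_eq_true]
    simp [Bool.not_eq_true']
  constructor
  · intro h hcond
    rw [checkZ, Bool.or_eq_true, Bool.not_eq_true'] at h
    rcases h with h | h
    · exact absurd (hb.mpr hcond) (by simp [h])
    · exact h
  · intro h
    rw [checkZ, Bool.or_eq_true, Bool.not_eq_true']
    by_cases hband : (matchB Z c' && D.all fun d => !matchAtB Z d) = true
    · exact Or.inr (h (hb.mp hband))
    · exact Or.inl (eq_false_of_ne_true hband)

theorem checkZ_mono {decWP : ℕ → List (Fin k) → Bool} {ι : Fin k → Fin k}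
    (hmono : ∀ {s t : ℕ} {w : List (Fin k)}, s ≤ t → decWP s w = true → decWP t w = true)
    {s t : ℕ} (hst : s ≤ t) {c' : PatternCoding k A}
    {D : List (List (Fin k) × PatternCoding k A)} {Z : List (List (Fin k) × A)}
    (h : checkZ decWP ι s c' D Z = true) : checkZ decWP ι t c' D Z = true := by
  rw [checkZ_iff] at h ⊢
  intro hcond
  obtain ⟨t1, h1, t2, h2, hwp, hne⟩ := inconsB_iff.mp (h hcond)
  exact inconsB_iff.mpr ⟨t1, h1, t2, h2, hmono hst hwp, hne⟩

theorem mem_bigW_left {c' : PatternCoding k A} {D : List (List (Fin k) × PatternCoding k A)}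
    {p : List (Fin k) × A} (hp : p ∈ c') : p.1 ∈ bigW c' D :=
  List.mem_append_left _ (List.mem_map.mpr ⟨p, hp, rfl⟩)

theorem mem_bigW_right {c' : PatternCoding k A} {D : List (List (Fin k) × PatternCoding k A)}
    {d : List (Fin k) × PatternCoding k A} {q : List (Fin k) × A}
    (hd : d ∈ D) (hq : q ∈ d.2) : d.1 ++ q.1 ∈ bigW c' D :=
  List.mem_append_right _ (List.mem_flatten.mpr
    ⟨_, List.mem_map.mpr ⟨d, hd, rfl⟩, List.mem_map.mpr ⟨q, hq, rfl⟩⟩)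

end Aux

theorem exists_stage {β : Type} {P : ℕ → β → Prop}
    (mono : ∀ {s t : ℕ} {b : β}, s ≤ t → P s b → P t b) :
    ∀ L : List β, (∀ b ∈ L, ∃ s, P s b) → ∃ s, ∀ b ∈ L, P s b := by
  intro L
  induction L with
  | nil => exact fun _ => ⟨0, by simp⟩
  | cons b L ih =>
    intro h
    obtain ⟨s1, hs1⟩ := h b (List.mem_cons_self ..)
    obtain ⟨s2, hs2⟩ := ih fun b' hb' => h b' (List.mem_cons_of_mem _ hb')
    refine ⟨max s1 s2, fun b' hb' => ?_⟩
    rcases List.mem_cons.mp hb' with rfl | hb'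
    · exact mono (le_max_left ..) hs1
    · exact mono (le_max_right ..) (hs2 b' hb')


/-- Over a recursively presented group, the projective subdynamics of an
effectively closed subshift onto a finitely generated subgroup is effectively closed. -/
theorem effectivelyClosed_projective_subdynamics
    {G : Type} [Group G] {k : ℕ} (S : Fin k → G) (hS : IsGenData S)
    (hWP : REPred (· ∈ WP S))
    (H : Subgroup G) {m : ℕ} (T : Fin m → H) (hT : IsGenData T)
    {A : Type} [Fintype A] [Primcodable A] (X : Set (G → A))
    (hsub : IsSubshift X) (hX : EffectivelyClosed S X) :
    EffectivelyClosed T {x : H → A | ∃ y ∈ X, ∀ h : H, x h = y ↑h} := by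
  by_cases hA : Nonempty A
  case neg =>
    haveI : IsEmpty A := not_nonempty_iff.mp hA
    haveI : IsEmpty (↥H → A) := ⟨fun f => isEmptyElim (f 1)⟩
    refine ⟨∅, ?_, ?_⟩
    · exact ComputablePred.to_re
        ⟨fun _ => instDecidableFalse, Computable.const false⟩
    · exact (Set.eq_empty_of_isEmpty _).trans (Set.eq_empty_of_isEmpty _).symm
  case pos =>
  letI dA : DecidableEq A := Classical.decEq A
  obtain ⟨C₀, hC₀, hXC₀⟩ := hX
  obtain ⟨decWP, hdecWP, decWPmono, decWPiff⟩ := repred_approx hWP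
  obtain ⟨decC, hdecC, decCmono, decCiff⟩ := repred_approx hC₀
  choose ι hι using hS.2.1
  choose u hu using fun i : Fin m => exists_word hS ((T i : ↥H) : G)
  have htr : ∀ w : List (Fin m), wordEval S (trWord u w) = ((wordEval T w : ↥H) : G) := by
    intro w
    induction w with
    | nil =>
      show wordEval S [] = ((1 : ↥H) : G)
      rw [wordEval_nil, OneMemClass.coe_one]
    | cons i w ih =>
      rw [trWord_cons, wordEval_append, hu, ih, wordEval_cons, Subgroup.coe_mul]
  set la : List A := (Finset.univ : Finset A).toList with hla_def
  have hla : ∀ a : A, a ∈ la := fun a => Finset.mem_toList.mpr (Finset.mem_univ a)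
  -- topology
  letI tA : TopologicalSpace A := ⊥
  haveI : DiscreteTopology A := ⟨rfl⟩
  have hXclosed : IsClosed X := hsub.1
  have hXcompact : IsCompact X := hXclosed.isCompact
  refine ⟨{c | ∃ n, Rfun u ι decWP decC la c n = true}, ?_, ?_⟩
  · exact repred_sigma (primrec_Rfun u ι hdecWP hdecC la)
  · ext x
    simp only [Set.mem_setOf_eq]
    constructor
    · -- x extends to X ⇒ x ∈ X_C
      rintro ⟨y, hyX, hxy⟩
      rintro ⟨g, c, ⟨n, hRn⟩, hocc⟩
      rcases hdec : (Encodable.decode (α := List (List (Fin k) × PatternCoding k A))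
          n.unpair.2) with _ | D
      · rw [Rfun, hdec] at hRn
        exact absurd hRn (by simp)
      rw [Rfun, hdec] at hRn
      simp only [Bool.and_eq_true, List.all_eq_true] at hRn
      obtain ⟨hDC, hall⟩ := hRn
      set s := n.unpair.1 with hs
      set c' : PatternCoding k A := trCoding u c with hc'
      set W : List (List (Fin k)) := bigW c' D with hW
      set z : G → A := fun a => y ((g : G) * a) with hz
      have hzX : z ∈ X := by
        have h1 := hsub.2 y hyX ((g : G)⁻¹)
        have h2 : z = fun h => y (((g : G)⁻¹)⁻¹ * h) := by
          funext a; rw [inv_inv]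
        rw [h2]
        exact h1
      set φ : List (Fin k) → A := fun w => z (wordEval S w) with hφ
      set Z : List (List (Fin k) × A) := W.map fun w => (w, φ w) with hZ
      have hZgraph : ∀ t ∈ Z, t.2 = φ t.1 := by
        intro t ht
        rw [hZ, List.mem_map] at ht
        obtain ⟨w, _, rfl⟩ := ht
        rfl
      have hZfst : Z.map Prod.fst = W := by
        rw [hZ, List.map_map]
        exact List.map_id W
      have hZmem : Z ∈ allZ la W := (mem_allZ hla W).mpr hZfst
      have hcheck := hall Z hZmem
      have hmatch : matchB Z c' = true := by
        rw [matchB_iff]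
        intro p hp
        have hp' := hp
        rw [hc', trCoding, List.mem_map] at hp'
        obtain ⟨p₀, hp₀, rfl⟩ := hp'
        have hmem : trWord u p₀.1 ∈ Z.map Prod.fst := by
          rw [hZfst]
          exact mem_bigW_left hp
        rw [aget_graph hZgraph hmem]
        have : φ (trWord u p₀.1) = p₀.2 := by
          rw [hφ]
          show z (wordEval S (trWord u p₀.1)) = p₀.2
          rw [htr, hz]
          show y ((g : G) * ((wordEval T p₀.1 : ↥H) : G)) = p₀.2
          rw [← Subgroup.coe_mul, ← hxy (g * wordEval T p₀.1)]
          exact hocc p₀ hp₀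
        rw [this]
      have hfail : ∀ d ∈ D, matchAtB Z d = false := by
        intro d hd
        by_contra hmd
        rw [← ne_eq, Ne, ← Bool.not_eq_true, not_not, matchAtB_iff] at hmd
        have hzXC : z ∉ XC S C₀ := by
          intro hzXC
          refine hzXC ⟨wordEval S d.1, d.2, (decCiff d.2).mpr ⟨s, hDC d hd⟩, ?_⟩
          intro q hq
          have hmem : d.1 ++ q.1 ∈ Z.map Prod.fst := by
            rw [hZfst]
            exact mem_bigW_right hd hq
          have h1 := aget_graph hZgraph hmem
          have h2 := hmd q hq
          rw [h1, Option.some.injEq] at h2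
          rw [← h2, hφ]
          show z (wordEval S d.1 * wordEval S q.1) = z (wordEval S (d.1 ++ q.1))
          rw [wordEval_append]
        rw [hXC₀] at hzX
        exact hzXC hzX
      have hinc := checkZ_iff.mp hcheck ⟨hmatch, hfail⟩
      rw [inconsB_iff] at hinc
      obtain ⟨t, ht, t', ht', hwp, hne⟩ := hinc
      apply hne
      have hteq : wordEval S t.1 = wordEval S t'.1 := by
        have h1 : (t.1 ++ wordInv ι t'.1) ∈ WP S := (decWPiff _).mpr ⟨s, hwp⟩
        have h2 : wordEval S (t.1 ++ wordInv ι t'.1) = 1 := h1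
        rw [wordEval_append, wordEval_wordInv S hι] at h2
        exact (mul_inv_eq_one).mp h2
      rw [hZgraph t ht, hZgraph t' ht', hφ]
      show z (wordEval S t.1) = z (wordEval S t'.1)
      rw [hteq]
    · -- x ∈ X_C ⇒ x extends to X
      intro hxXC
      by_contra hxY
      -- finitely many constraints suffice
      have hcl : ∀ h : ↥H, IsClosed {y : G → A | y ((h : ↥H) : G) = x h} := by
        intro h
        have heq : {y : G → A | y ((h : ↥H) : G) = x h} =
            (fun y : G → A => y ((h : ↥H) : G)) ⁻¹' {x h} := rfl
        rw [heq]
        exact (isClosed_discrete _).preimage (continuous_apply _)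
      have hempty : X ∩ ⋂ h : ↥H, {y : G → A | y ((h : ↥H) : G) = x h} = ∅ := by
        rw [Set.eq_empty_iff_forall_notMem]
        rintro y ⟨hyX, hy⟩
        rw [Set.mem_iInter] at hy
        exact hxY ⟨y, hyX, fun h => (hy h).symm⟩
      obtain ⟨F, hF⟩ := hXcompact.elim_finite_subfamily_closed _ hcl hempty
      choose wh hwh using fun h : ↥H => exists_word hT h
      set c : PatternCoding m A := F.toList.map fun h => (wh h, x h) with hcdef
      set c' : PatternCoding k A := trCoding u c with hc'
      have hcylF : ∀ y : G → A,
          (∀ p ∈ c', y (wordEval S p.1) = p.2) ↔ ∀ h ∈ F, y ((h : ↥H) : G) = x h := by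
        intro y
        constructor
        · intro hy h hh
          have hpc : (trWord u (wh h), x h) ∈ c' := by
            rw [hc', trCoding, List.mem_map]
            exact ⟨(wh h, x h), List.mem_map.mpr ⟨h, Finset.mem_toList.mpr hh, rfl⟩, rfl⟩
          have := hy _ hpc
          rw [htr, hwh] at this
          exact this
        · intro hy p hp
          rw [hc', trCoding, List.mem_map] at hp
          obtain ⟨p₀, hp₀, rfl⟩ := hp
          rw [hcdef, List.mem_map] at hp₀
          obtain ⟨h, hh, rfl⟩ := hp₀
          show y (wordEval S (trWord u (wh h))) = x h
          rw [htr, hwh]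
          exact hy h (Finset.mem_toList.mp hh)
      have hXcyl : ∀ y ∈ X, ¬ ∀ p ∈ c', y (wordEval S p.1) = p.2 := by
        intro y hyX hy
        have h1 : y ∈ X ∩ ⋂ h ∈ F, {y : G → A | y ((h : ↥H) : G) = x h} := by
          refine ⟨hyX, ?_⟩
          rw [Set.mem_iInter₂]
          exact fun h hh => (hcylF y).mp hy h hh
        rw [hF] at h1
        exact h1
      -- compactness: finite subcover of the cylinder
      set Cyl : Set (G → A) := {y | ∀ p ∈ c', y (wordEval S p.1) = p.2} with hCyl
      have hCylclosed : IsClosed Cyl := by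
        have : Cyl = ⋂ p ∈ c', {y : G → A | y (wordEval S p.1) = p.2} := by
          ext y; simp [hCyl]
        rw [this]
        refine isClosed_biInter fun p _ => ?_
        have heq : {y : G → A | y (wordEval S p.1) = p.2} =
            (fun y : G → A => y (wordEval S p.1)) ⁻¹' {p.2} := rfl
        rw [heq]
        exact (isClosed_discrete _).preimage (continuous_apply _)
      have hCylcompact : IsCompact Cyl := hCylclosed.isCompact
      set U : {e : G × PatternCoding k A // e.2 ∈ C₀} → Set (G → A) :=
        fun e => {y | ∀ q ∈ e.1.2, y (e.1.1 * wordEval S q.1) = q.2} with hU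
      have hUopen : ∀ e, IsOpen (U e) := by
        intro e
        have : U e = ⋂ q ∈ e.1.2, {y : G → A | y (e.1.1 * wordEval S q.1) = q.2} := by
          ext y; simp [hU]
        rw [this]
        refine (List.finite_toSet e.1.2).isOpen_biInter fun q _ => ?_
        have heq : {y : G → A | y (e.1.1 * wordEval S q.1) = q.2} =
            (fun y : G → A => y (e.1.1 * wordEval S q.1)) ⁻¹' {q.2} := rfl
        rw [heq]
        exact (isOpen_discrete _).preimage (continuous_apply _)
      have hcover : Cyl ⊆ ⋃ e, U e := by
        intro y hy
        have hyX : y ∉ X := fun hyX => hXcyl y hyX hy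
        rw [hXC₀] at hyX
        have : ∃ g0 c₀, c₀ ∈ C₀ ∧ ∀ q ∈ c₀, y (g0 * wordEval S q.1) = q.2 := by
          by_contra hno
          exact hyX hno
        obtain ⟨g0, c₀, hc₀, hocc⟩ := this
        exact Set.mem_iUnion.mpr ⟨⟨(g0, c₀), hc₀⟩, hocc⟩
      obtain ⟨Ft, hFt⟩ := hCylcompact.elim_finite_subcover U hUopen hcover
      choose vg hvg using fun e : {e : G × PatternCoding k A // e.2 ∈ C₀} =>
        exists_word hS e.1.1
      set D : List (List (Fin k) × PatternCoding k A) :=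
        Ft.toList.map fun e => (vg e, e.1.2) with hD
      set W : List (List (Fin k)) := bigW c' D with hW
      -- every "bad" assignment has an inconsistency at some stage
      have hmain : ∀ Z ∈ allZ la W, ∃ s, checkZ decWP ι s c' D Z = true := by
        intro Z hZmem
        by_cases hbad : matchB Z c' = true ∧ ∀ d ∈ D, matchAtB Z d = false
        case neg => exact ⟨0, checkZ_iff.mpr fun h => absurd h hbad⟩
        case pos =>
        by_cases hcons : ∃ t ∈ Z, ∃ t' ∈ Z, wordEval S t.1 = wordEval S t'.1 ∧ t.2 ≠ t'.2
        · obtain ⟨t, ht, t', ht', heq, hne⟩ := hcons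
          have hwp : (t.1 ++ wordInv ι t'.1) ∈ WP S := by
            show wordEval S (t.1 ++ wordInv ι t'.1) = 1
            rw [wordEval_append, wordEval_wordInv S hι, heq, mul_inv_cancel]
          obtain ⟨s, hs⟩ := (decWPiff _).mp hwp
          exact ⟨s, checkZ_iff.mpr fun _ => inconsB_iff.mpr ⟨t, ht, t', ht', hs, hne⟩⟩
        · exfalso
          push_neg at hcons
          set y : G → A := fun a =>
            if hx : ∃ t, t ∈ Z ∧ wordEval S t.1 = a then hx.choose.2
            else Classical.arbitrary A with hy
          have hykey : ∀ t ∈ Z, y (wordEval S t.1) = t.2 := by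
            intro t ht
            have hx : ∃ t', t' ∈ Z ∧ wordEval S t'.1 = wordEval S t.1 := ⟨t, ht, rfl⟩
            rw [hy]
            show (if hx' : ∃ t', t' ∈ Z ∧ wordEval S t'.1 = wordEval S t.1
                then hx'.choose.2 else Classical.arbitrary A) = t.2
            rw [dif_pos hx]
            obtain ⟨ht0, heq0⟩ := hx.choose_spec
            exact hcons _ ht0 t ht heq0
          have hZfst : Z.map Prod.fst = W := (mem_allZ hla W).mp hZmem
          have hycyl : y ∈ Cyl := by
            intro p hp
            obtain ⟨t, ht, h1, h2⟩ := aget_eq_some (matchB_iff.mp hbad.1 p hp)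
            rw [← h1, hykey t ht, h2]
          obtain ⟨e, heFt, hyU⟩ : ∃ e ∈ Ft, y ∈ U e := by
            have := hFt hycyl
            rw [Set.mem_iUnion₂] at this
            obtain ⟨e, he, hmem⟩ := this
            exact ⟨e, he, hmem⟩
          have hdD : (vg e, e.1.2) ∈ D :=
            List.mem_map.mpr ⟨e, Finset.mem_toList.mpr heFt, rfl⟩
          have hmAt := hbad.2 _ hdD
          rw [← Bool.not_eq_true, matchAtB_iff] at hmAt
          apply hmAt
          intro q hq
          have hmem : vg e ++ q.1 ∈ Z.map Prod.fst := by
            rw [hZfst]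
            exact mem_bigW_right hdD hq
          obtain ⟨b, hb⟩ := aget_isSome hmem
          obtain ⟨t, ht, ht1, ht2⟩ := aget_eq_some hb
          rw [hb]
          have : b = q.2 := by
            rw [← ht2, ← hykey t ht, ht1, wordEval_append, hvg]
            exact hyU q hq
          rw [this]
      -- combine stages
      have hDC₀ : ∀ d ∈ D, d.2 ∈ C₀ := by
        intro d hd
        rw [hD, List.mem_map] at hd
        obtain ⟨e, _, rfl⟩ := hd
        exact e.2
      obtain ⟨s1, hs1⟩ := exists_stage
        (P := fun s Z => checkZ decWP ι s c' D Z = true)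
        (fun {s t Z} hst h => checkZ_mono (decWP := decWP) (ι := ι) decWPmono hst h)
        (allZ la W) hmain
      obtain ⟨s2, hs2⟩ := exists_stage
        (P := fun s d => decC s d.2 = true)
        (fun {s t d} hst h => decCmono (a := d.2) hst h) D
        (fun d hd => (decCiff d.2).mp (hDC₀ d hd))
      refine hxXC ⟨1, c, ⟨Nat.pair (max s1 s2) (Encodable.encode D), ?_⟩, ?_⟩
      · rw [Rfun]
        simp only [Nat.unpair_pair, Encodable.encodek]
        rw [Bool.and_eq_true, List.all_eq_true, List.all_eq_true]
        constructor
        · exact fun d hd => decCmono (le_max_right s1 s2) (hs2 d hd)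
        · exact fun Z hZ => checkZ_mono (decWP := decWP) (ι := ι) decWPmono (le_max_left s1 s2) (hs1 Z hZ)
      · intro p hp
        rw [hcdef, List.mem_map] at hp
        obtain ⟨h, _, rfl⟩ := hp
        show x (1 * wordEval T (wh h)) = x h
        rw [one_mul, hwh]


end SDG
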